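/- Let μ > 0, γ > 0, η = (ηₙ, ηₜ) ∈ ℝ × ℝ², φₙ ∈ ℝ, and C_μ = {(λₙ, λₜ) ∈ ℝ × ℝ² : λₙ ≥ 0 and ‖λₜ‖ ≤ μλₙ}. Define the strict operator output λ̂ = (λ̂ₙ, λ̂ₜ) by λ̂ₙ = max(−γ⁻¹(ηₙ + φₙ), 0), λ*ₜ = −γ⁻¹ηₜ, and λ̂ₜ = λ*ₜ if ‖λ*ₜ‖ ≤ μλ̂ₙ, λ̂ₜ = μλ̂ₙ·λ*ₜ/‖λ*ₜ‖ otherwise. Then λ̂ is the unique minimizer of the maximal-dissipation objective λ ↦ ½γ‖λ‖² + λᵀ(η + (φₙ, 0)) over the set {λ = (λₙ, λₜ) ∈ C_μ : λₙ ≥ 0, γλₙ + ηₙ + φₙ ≥ 0, and λₙ·(γλₙ + ηₙ + φₙ) = 0}. -/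

import Mathlib

open RealInnerProductSpace

lemma proj_ball_sq_lt {E : Type*} [NormedAddCommGroup E] [InnerProductSpace ℝ E]
    (s t : E) (r : ℝ) (hr : 0 ≤ r) (hs : r < ‖s‖) (ht : ‖t‖ ≤ r)
    (hne : t ≠ (r / ‖s‖) • s) :
    ‖(r / ‖s‖) • s - s‖ ^ 2 < ‖t - s‖ ^ 2 := by
  have hspos : (0:ℝ) < ‖s‖ := lt_of_le_of_lt hr hs
  have hs0 : ‖s‖ ≠ 0 := ne_of_gt hspos
  have hproj : ‖(r / ‖s‖) • s - s‖ = ‖s‖ - r := by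
    have : (r / ‖s‖) • s - s = ((r - ‖s‖) / ‖s‖) • s := by
      rw [sub_div, div_self hs0, sub_smul, one_smul]
    rw [this, norm_smul, Real.norm_eq_abs, abs_div, abs_of_nonpos (by linarith),
      abs_of_pos (by linarith : (0:ℝ) < ‖s‖), div_mul_cancel₀]
    · ring
    · exact hs0
  rw [hproj, norm_sub_sq_real]
  have hcs := real_inner_le_norm t s
  rcases lt_or_eq_of_le hcs with hlt | heq
  · nlinarith [norm_nonneg t, norm_nonneg s]
  · have : ‖s‖ • t = ‖t‖ • s := (inner_eq_norm_mul_iff_real).mp heq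
    have htv : t = (‖t‖ / ‖s‖) • s := by
      have h2 := congrArg (fun v => (‖s‖)⁻¹ • v) this
      simpa [smul_smul, inv_mul_cancel₀ hs0, div_eq_inv_mul] using h2
    have htr : ‖t‖ < r := by
      rcases lt_or_eq_of_le ht with h | h
      · exact h
      · exact absurd (h ▸ htv) hne
    have h1 : ⟪t, s⟫ = ‖t‖ * ‖s‖ := heq
    nlinarith [norm_nonneg t]

set_option maxHeartbeats 1000000 in
/-- **Proposition 6 (isotropic case).** The strict operator output is the unique minimizer
of the maximal-dissipation objective `½γ‖λ‖² + λᵀ(η + φ)` over the friction cone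
intersected with the normal Signorini complementarity constraint. -/
theorem strict_operator_is_mdp (μ γ : ℝ) (hμ : 0 < μ) (hγ : 0 < γ)
    (ηn φn : ℝ) (ηt : EuclideanSpace ℝ (Fin 2))
    (lamn : ℝ) (lamtstar lamt : EuclideanSpace ℝ (Fin 2))
    (hlamn : lamn = max (-(γ⁻¹ * (ηn + φn))) 0)
    (hstar : lamtstar = (-γ⁻¹) • ηt)
    (hlamt : lamt = if ‖lamtstar‖ ≤ μ * lamn then lamtstar
      else (μ * lamn / ‖lamtstar‖) • lamtstar)
    (D : Set (ℝ × EuclideanSpace ℝ (Fin 2)))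
    (hD : D = {p | (0 ≤ p.1 ∧ ‖p.2‖ ≤ μ * p.1) ∧
      0 ≤ γ * p.1 + ηn + φn ∧ p.1 * (γ * p.1 + ηn + φn) = 0})
    (g : ℝ × EuclideanSpace ℝ (Fin 2) → ℝ)
    (hg : ∀ p, g p = (1/2) * γ * (p.1 ^ 2 + ‖p.2‖ ^ 2) + p.1 * (ηn + φn) + ⟪p.2, ηt⟫) :
    (lamn, lamt) ∈ D ∧ ∀ p ∈ D, p ≠ (lamn, lamt) → g (lamn, lamt) < g p := by
  have hγ0 : γ ≠ 0 := ne_of_gt hγ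
  have hγinv : 0 < γ⁻¹ := inv_pos.mpr hγ
  set a := ηn + φn with ha_def
  rcases le_or_gt 0 a with ha | ha
  · -- a ≥ 0 : lamn = 0, D = {(0,0)}
    have hlamn0 : lamn = 0 := by
      rw [hlamn, max_eq_right]
      nlinarith
    have hlamt0 : lamt = 0 := by
      rw [hlamt, hlamn0]
      split_ifs with h
      · have : ‖lamtstar‖ ≤ 0 := by simpa using h
        exact norm_le_zero_iff.mp this
      · rw [mul_zero, zero_div, zero_smul]
    subst hD
    constructor
    · refine ⟨⟨by rw [hlamn0], by rw [hlamn0, hlamt0]; simp⟩, ?_, ?_⟩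
      · rw [hlamn0]; simp only [mul_zero, zero_add]; linarith
      · rw [hlamn0]; ring
    · intro p hp hne
      exfalso
      obtain ⟨⟨hp1, hp2⟩, hp3, hp4⟩ := hp
      have hp10 : p.1 = 0 := by
        by_contra h
        have hpos : 0 < p.1 := lt_of_le_of_ne hp1 (Ne.symm h)
        have : 0 < γ * p.1 + ηn + φn := by nlinarith
        nlinarith
      have hp20 : p.2 = 0 := by
        have : ‖p.2‖ ≤ 0 := by rw [hp10] at hp2; simpa using hp2
        exact norm_le_zero_iff.mp this
      exact hne (Prod.ext (by rw [hp10, hlamn0]) (by rw [hp20, hlamt0]))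
  · -- a < 0 : lamn = -γ⁻¹ a > 0
    have hlamnval : lamn = -(γ⁻¹ * a) := by
      rw [hlamn, max_eq_left]
      nlinarith
    have hlamnpos : 0 < lamn := by rw [hlamnval]; nlinarith
    have hrpos : 0 < μ * lamn := mul_pos hμ hlamnpos
    have hKKT : γ * lamn + ηn + φn = 0 := by
      rw [hlamnval, ha_def]
      field_simp
      ring
    have hηt : ηt = (-γ) • lamtstar := by
      rw [hstar, smul_smul]
      rw [show (-γ) * (-γ⁻¹) = γ * γ⁻¹ by ring, mul_inv_cancel₀ hγ0, one_smul]
    have hlamt_norm : ‖lamt‖ ≤ μ * lamn := by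
      rw [hlamt]
      split_ifs with h
      · exact h
      · push_neg at h
        have hls : 0 < ‖lamtstar‖ := lt_trans hrpos h
        rw [norm_smul, Real.norm_eq_abs, abs_div, abs_of_nonneg (le_of_lt hrpos),
          abs_of_pos hls, div_mul_cancel₀ _ (ne_of_gt hls)]
    have hmem : (lamn, lamt) ∈ D := by
      rw [hD]
      exact ⟨⟨le_of_lt hlamnpos, hlamt_norm⟩, by rw [hKKT], by rw [hKKT]; ring⟩
    refine ⟨hmem, ?_⟩
    intro p hp hne
    rw [hD] at hp
    obtain ⟨⟨hp1, hp2⟩, hp3, hp4⟩ := hp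
    have hp1v : p.1 = lamn := by
      have hp1pos : 0 < p.1 := by
        rcases lt_or_eq_of_le hp1 with h | h
        · exact h
        · exfalso; rw [← h] at hp3; simp only [mul_zero, zero_add] at hp3; linarith
      have hz : γ * p.1 + ηn + φn = 0 := by
        by_contra h
        have : 0 < γ * p.1 + ηn + φn := lt_of_le_of_ne hp3 (Ne.symm h)
        nlinarith
      have : γ * p.1 = γ * lamn := by linarith
      exact mul_left_cancel₀ hγ0 this
    have hpt : p.2 ≠ lamt := by
      intro h
      exact hne (Prod.ext hp1v h)
    -- key inequality on tangential parts
    have hkey : ‖lamt - lamtstar‖ ^ 2 < ‖p.2 - lamtstar‖ ^ 2 := by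
      by_cases h : ‖lamtstar‖ ≤ μ * lamn
      · have hlt : lamt = lamtstar := by rw [hlamt, if_pos h]
        rw [hlt, sub_self, norm_zero]
        have : p.2 - lamtstar ≠ 0 := fun hc => hpt (by rw [hlt]; exact sub_eq_zero.mp hc)
        simpa using pow_pos (norm_pos_iff.mpr this) 2
      · push_neg at h
        have hlt : lamt = (μ * lamn / ‖lamtstar‖) • lamtstar := by
          rw [hlamt, if_neg (not_le.mpr h)]
        rw [hlt]
        apply proj_ball_sq_lt _ _ _ (le_of_lt hrpos) h (hp1v ▸ hp2)
        rw [← hlt]; exact hpt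
    have hinner1 : ⟪p.2, ηt⟫ = -γ * ⟪p.2, lamtstar⟫ := by
      rw [hηt, real_inner_smul_right]
    have hinner2 : ⟪lamt, ηt⟫ = -γ * ⟪lamt, lamtstar⟫ := by
      rw [hηt, real_inner_smul_right]
    have he1 : ‖p.2 - lamtstar‖ ^ 2 = ‖p.2‖ ^ 2 - 2 * ⟪p.2, lamtstar⟫ + ‖lamtstar‖ ^ 2 :=
      norm_sub_sq_real _ _
    have he2 : ‖lamt - lamtstar‖ ^ 2 = ‖lamt‖ ^ 2 - 2 * ⟪lamt, lamtstar⟫ + ‖lamtstar‖ ^ 2 :=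
      norm_sub_sq_real _ _
    rw [hg, hg]
    simp only [hp1v, hinner1, hinner2]
    have hlin : ‖lamt‖ ^ 2 - 2 * ⟪lamt, lamtstar⟫ < ‖p.2‖ ^ 2 - 2 * ⟪p.2, lamtstar⟫ := by
      linarith [hkey, he1, he2]
    nlinarith [mul_lt_mul_of_pos_left hlin hγ]
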